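/- Let A : ℝ → Matrix (Fin n) (Fin n) ℂ be continuous with ‖(A(t)+A(t)ᴴ)/2‖ ≤ α for all t (Frobenius norm), and let F : ℝ → Matrix (Fin n) (Fin n) ℂ be continuous with ‖F(t)‖ ≤ M for all t. If U solves U'(t) + A(t) * U(t) = F(t) with U(0) = 0, then for all t ∈ [0, τ] with τ > 0 and α > 0: ‖U(t)‖ ≤ M * (exp(α τ) - 1)/α; and if α = 0 then ‖U(t)‖ ≤ M τ. -/

import Mathlib

open Matrix
open scoped BigOperators

noncomputable def frobNorm {n : ℕ} (M : Matrix (Fin n) (Fin n) ℂ) : ℝ :=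
  Real.sqrt (∑ i, ∑ j, ‖M i j‖ ^ 2)

attribute [local instance] Matrix.frobeniusSeminormedAddCommGroup

lemma frobNorm_eq_norm {n : ℕ} (M : Matrix (Fin n) (Fin n) ℂ) : frobNorm M = ‖M‖ := by
  rw [Matrix.frobenius_norm_def, frobNorm, Real.sqrt_eq_rpow]; norm_num

lemma frob_cs {n : ℕ} (X Y : Matrix (Fin n) (Fin n) ℂ) :
    ∑ i, ∑ j, ((starRingEnd ℂ) (X i j) * Y i j).re ≤ frobNorm X * frobNorm Y := by
  have h1 : ∀ i j : Fin n, ((starRingEnd ℂ) (X i j) * Y i j).re ≤ ‖X i j‖ * ‖Y i j‖ := by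
    intro i j
    calc ((starRingEnd ℂ) (X i j) * Y i j).re ≤ ‖(starRingEnd ℂ) (X i j) * Y i j‖ :=
          Complex.re_le_norm _
      _ = ‖X i j‖ * ‖Y i j‖ := by rw [norm_mul, RCLike.norm_conj]
  calc ∑ i, ∑ j, ((starRingEnd ℂ) (X i j) * Y i j).re
      ≤ ∑ i, ∑ j, ‖X i j‖ * ‖Y i j‖ :=
        Finset.sum_le_sum fun i _ => Finset.sum_le_sum fun j _ => h1 i j
    _ = ∑ p : Fin n × Fin n, ‖X p.1 p.2‖ * ‖Y p.1 p.2‖ := by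
        rw [← Finset.sum_product']; rfl
    _ ≤ Real.sqrt (∑ p : Fin n × Fin n, ‖X p.1 p.2‖ ^ 2) *
        Real.sqrt (∑ p : Fin n × Fin n, ‖Y p.1 p.2‖ ^ 2) :=
        Real.sum_mul_le_sqrt_mul_sqrt _ _ _
    _ = frobNorm X * frobNorm Y := by
        rw [frobNorm, frobNorm, ← Finset.sum_product', ← Finset.sum_product']; rfl

lemma frob_sym {n : ℕ} (A X : Matrix (Fin n) (Fin n) ℂ) :
    ∑ i, ∑ j, ((starRingEnd ℂ) (X i j) * (Aᴴ * X) i j).re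
      = ∑ i, ∑ j, ((starRingEnd ℂ) (X i j) * (A * X) i j).re := by
  have expand : ∀ (B : Matrix (Fin n) (Fin n) ℂ) (i j : Fin n),
      ((starRingEnd ℂ) (X i j) * (B * X) i j).re
        = ∑ k, ((starRingEnd ℂ) (X i j) * (B i k * X k j)).re := by
    intro B i j
    rw [Matrix.mul_apply, Finset.mul_sum, Complex.re_sum]
  simp only [expand, Matrix.conjTranspose_apply]
  have key : ∀ i j k : Fin n,
      ((starRingEnd ℂ) (X k j) * ((starRingEnd ℂ) (A i k) * X i j)).re
        = ((starRingEnd ℂ) (X i j) * (A i k * X k j)).re := by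
    intro i j k
    rw [← Complex.conj_re ((starRingEnd ℂ) (X i j) * (A i k * X k j))]
    congr 1
    simp only [_root_.map_mul, Complex.conj_conj]
    ring
  have swap3 : ∀ f : Fin n → Fin n → Fin n → ℝ,
      ∑ i, ∑ j, ∑ k, f i j k = ∑ i, ∑ j, ∑ k, f k j i := by
    intro f
    calc ∑ i, ∑ j, ∑ k, f i j k
        = ∑ j, ∑ i, ∑ k, f i j k := Finset.sum_comm
      _ = ∑ j, ∑ k, ∑ i, f i j k := Finset.sum_congr rfl fun j _ => Finset.sum_comm
      _ = ∑ k, ∑ j, ∑ i, f i j k := Finset.sum_comm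
  calc ∑ i, ∑ j, ∑ k, ((starRingEnd ℂ) (X i j) * (star (A k i) * X k j)).re
      = ∑ i, ∑ j, ∑ k, ((starRingEnd ℂ) (X k j) * (star (A i k) * X i j)).re :=
        swap3 _
    _ = ∑ i, ∑ j, ∑ k, ((starRingEnd ℂ) (X i j) * (A i k * X k j)).re := by
        refine Finset.sum_congr rfl fun i _ => Finset.sum_congr rfl fun j _ =>
          Finset.sum_congr rfl fun k _ => ?_
        exact key i j k

lemma frob_quad_bound {n : ℕ} (A X : Matrix (Fin n) (Fin n) ℂ) {α : ℝ}
    (hA : frobNorm (((1 : ℂ) / 2) • (A + Aᴴ)) ≤ α) :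
    -(α * (frobNorm X * frobNorm X)) ≤ ∑ i, ∑ j, ((starRingEnd ℂ) (X i j) * (A * X) i j).re := by
  set S := ((1 : ℂ)/2) • (A + Aᴴ) with hS
  have hSX : ∀ i j : Fin n, (S * X) i j = (1/2 : ℂ) * ((A * X) i j + (Aᴴ * X) i j) := by
    intro i j
    rw [hS, Matrix.smul_mul, Matrix.add_mul]
    simp [mul_add]
  have half : ∀ z : ℂ, ((1/2 : ℂ) * z).re = z.re / 2 := by
    intro z
    have h12 : ((1/2 : ℂ)) = ((1/2 : ℝ) : ℂ) := by norm_num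
    rw [h12, Complex.re_ofReal_mul]; ring
  have hsym : ∑ i, ∑ j, ((starRingEnd ℂ) (X i j) * (S * X) i j).re
      = ∑ i, ∑ j, ((starRingEnd ℂ) (X i j) * (A * X) i j).re := by
    have hpt : ∀ i j : Fin n, ((starRingEnd ℂ) (X i j) * (S * X) i j).re
        = ((starRingEnd ℂ) (X i j) * (A * X) i j).re / 2
          + ((starRingEnd ℂ) (X i j) * (Aᴴ * X) i j).re / 2 := by
      intro i j
      rw [hSX i j, mul_left_comm, half, mul_add, Complex.add_re]
      ring
    simp only [hpt, Finset.sum_add_distrib, ← Finset.sum_div, frob_sym A X]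
    ring
  have hcs := frob_cs X ((-S) * X)
  have hptneg : ∀ i j : Fin n, ((starRingEnd ℂ) (X i j) * ((-S) * X) i j).re
      = -(((starRingEnd ℂ) (X i j) * (S * X) i j).re) := by
    intro i j
    rw [Matrix.neg_mul]
    simp
  have hlhs : ∑ i, ∑ j, ((starRingEnd ℂ) (X i j) * ((-S) * X) i j).re
      = -∑ i, ∑ j, ((starRingEnd ℂ) (X i j) * (A * X) i j).re := by
    simp only [hptneg, Finset.sum_neg_distrib, hsym]
  have hmul : frobNorm ((-S) * X) ≤ α * frobNorm X := by
    rw [frobNorm_eq_norm]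
    calc ‖(-S) * X‖ ≤ ‖(-S)‖ * ‖X‖ := Matrix.frobenius_norm_mul _ _
      _ = ‖S‖ * ‖X‖ := by rw [norm_neg]
      _ ≤ α * ‖X‖ := by
          apply mul_le_mul_of_nonneg_right _ (norm_nonneg _)
          rw [← frobNorm_eq_norm]; exact hA
      _ = α * frobNorm X := by rw [← frobNorm_eq_norm]
  have hXnn : 0 ≤ frobNorm X := Real.sqrt_nonneg _
  nlinarith [hcs, hlhs, hmul]

lemma hasDerivAt_entry_sq {n : ℕ} (A F U : ℝ → Matrix (Fin n) (Fin n) ℂ)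
    (hU : ∀ t i j, HasDerivAt (fun s => U s i j) ((F t - A t * U t) i j) t)
    (s : ℝ) (i j : Fin n) :
    HasDerivAt (fun r => ‖U r i j‖ ^ 2)
      (2 * ((starRingEnd ℂ) (U s i j) * (F s - A s * U s) i j).re) s := by
  have hre : HasDerivAt (fun r => (U r i j).re) ((F s - A s * U s) i j).re s := by
    have h := Complex.reCLM.hasFDerivAt.comp_hasDerivAt s (hU s i j)
    simp only [Complex.reCLM_apply] at h
    exact h
  have him : HasDerivAt (fun r => (U r i j).im) ((F s - A s * U s) i j).im s := by
    have h := Complex.imCLM.hasFDerivAt.comp_hasDerivAt s (hU s i j)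
    simp only [Complex.imCLM_apply] at h
    exact h
  have hsum := (hre.fun_pow 2).add (him.fun_pow 2)
  have heq : (fun r => ‖U r i j‖ ^ 2) = fun r => (U r i j).re ^ 2 + (U r i j).im ^ 2 := by
    funext r
    rw [Complex.sq_norm, Complex.normSq_apply]
    ring
  rw [heq]
  refine hsum.congr_deriv ?_
  simp [Complex.mul_re, pow_one]
  ring

/-- A priori estimate for the inhomogeneous linear matrix ODE `U' + A U = F`, `U 0 = 0`. -/
theorem stmt2 (n : ℕ) (A F U : ℝ → Matrix (Fin n) (Fin n) ℂ) (α M τ : ℝ)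
    (hA : Continuous A) (hF : Continuous F)
    (hα : 0 ≤ α) (hτ : 0 < τ)
    (hAbound : ∀ t, frobNorm (((1 : ℂ) / 2) • (A t + (A t)ᴴ)) ≤ α)
    (hFbound : ∀ t, frobNorm (F t) ≤ M)
    (hU : ∀ t i j, HasDerivAt (fun s => U s i j) ((F t - A t * U t) i j) t)
    (hU0 : U 0 = 0) :
    ∀ t ∈ Set.Icc (0 : ℝ) τ,
      (0 < α → frobNorm (U t) ≤ M * (Real.exp (α * τ) - 1) / α) ∧
      (α = 0 → frobNorm (U t) ≤ M * τ) := by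
  intro t ht
  have hM0 : 0 ≤ M := le_trans (Real.sqrt_nonneg _) (hFbound 0)
  set g : ℝ → ℝ := fun s => ∑ i, ∑ j, ‖U s i j‖ ^ 2 with hgdef
  have hgnn : ∀ s, 0 ≤ g s := fun s =>
    Finset.sum_nonneg fun i _ => Finset.sum_nonneg fun j _ => by positivity
  set P : ℝ → ℝ :=
    fun s => 2 * ∑ i, ∑ j, ((starRingEnd ℂ) (U s i j) * (F s - A s * U s) i j).re with hPdef
  have hgd : ∀ s, HasDerivAt g (P s) s := by
    intro s
    have := HasDerivAt.fun_sum (fun i (_ : i ∈ Finset.univ) =>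
      HasDerivAt.fun_sum (fun j (_ : j ∈ Finset.univ) => hasDerivAt_entry_sq A F U hU s i j))
    refine this.congr_deriv ?_
    simp only [hPdef, Finset.mul_sum]
  have hfrob : ∀ s, frobNorm (U s) = Real.sqrt (g s) := fun s => by
    simp only [frobNorm, hgdef]
  have hPle : ∀ s, P s ≤ 2 * M * Real.sqrt (g s) + 2 * α * g s := by
    intro s
    have hsplit : ∑ i, ∑ j, ((starRingEnd ℂ) (U s i j) * (F s - A s * U s) i j).re
        = (∑ i, ∑ j, ((starRingEnd ℂ) (U s i j) * (F s) i j).re)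
          - ∑ i, ∑ j, ((starRingEnd ℂ) (U s i j) * (A s * U s) i j).re := by
      simp only [Matrix.sub_apply, mul_sub, Complex.sub_re, Finset.sum_sub_distrib]
    have h1 := frob_cs (U s) (F s)
    have h2 := frob_quad_bound (A s) (U s) (hAbound s)
    have hUnn : 0 ≤ frobNorm (U s) := Real.sqrt_nonneg _
    have hg_eq : frobNorm (U s) * frobNorm (U s) = g s := by
      rw [hfrob]; exact Real.mul_self_sqrt (hgnn s)
    have hFb := hFbound s
    have h1' : ∑ i, ∑ j, ((starRingEnd ℂ) (U s i j) * (F s) i j).re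
        ≤ Real.sqrt (g s) * M := by
      calc ∑ i, ∑ j, ((starRingEnd ℂ) (U s i j) * (F s) i j).re
          ≤ frobNorm (U s) * frobNorm (F s) := h1
        _ ≤ frobNorm (U s) * M := mul_le_mul_of_nonneg_left hFb hUnn
        _ = Real.sqrt (g s) * M := by rw [hfrob]
    have h2' : -(α * g s) ≤ ∑ i, ∑ j, ((starRingEnd ℂ) (U s i j) * (A s * U s) i j).re := by
      calc -(α * g s) = -(α * (frobNorm (U s) * frobNorm (U s))) := by rw [hg_eq]
        _ ≤ _ := h2
    simp only [hPdef]
    rw [hsplit]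
    linarith
  have key : ∀ ε : ℝ, 0 < ε → Real.sqrt (g t) ≤ gronwallBound ε α M t := by
    intro ε hε
    set h : ℝ → ℝ := fun s => Real.sqrt (g s + ε ^ 2) with hhdef
    have hpos : ∀ s, 0 < g s + ε ^ 2 := fun s =>
      add_pos_of_nonneg_of_pos (hgnn s) (by positivity)
    have hhd : ∀ s, HasDerivAt h (P s / (2 * Real.sqrt (g s + ε ^ 2))) s := fun s =>
      ((hgd s).add_const (ε ^ 2)).sqrt (ne_of_gt (hpos s))
    have hcont : ContinuousOn h (Set.Icc 0 τ) :=
      (continuous_iff_continuousAt.2 fun s => (hhd s).continuousAt).continuousOn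
    have hinit : h 0 ≤ ε := by
      have hg0 : g 0 = 0 := by simp [hgdef, hU0]
      rw [hhdef]
      simp only [hg0, zero_add]
      rw [Real.sqrt_sq hε.le]
    have hbound : ∀ s, P s / (2 * Real.sqrt (g s + ε ^ 2)) ≤ α * h s + M := by
      intro s
      have hsq : 0 < Real.sqrt (g s + ε ^ 2) := Real.sqrt_pos.2 (hpos s)
      rw [div_le_iff₀ (mul_pos two_pos hsq)]
      have hs1 : Real.sqrt (g s) ≤ Real.sqrt (g s + ε ^ 2) :=
        Real.sqrt_le_sqrt (by nlinarith [sq_nonneg ε])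
      have hs2 : Real.sqrt (g s + ε ^ 2) * Real.sqrt (g s + ε ^ 2) = g s + ε ^ 2 :=
        Real.mul_self_sqrt (hpos s).le
      have hP := hPle s
      have hgle : g s ≤ g s + ε ^ 2 := by nlinarith [sq_nonneg ε]
      have hsqnn : 0 ≤ Real.sqrt (g s) := Real.sqrt_nonneg _
      rw [hhdef]
      dsimp only
      nlinarith [mul_le_mul_of_nonneg_left hs1 hM0, mul_le_mul_of_nonneg_left hgle hα]
    have hfreq : ∀ x ∈ Set.Ico (0 : ℝ) τ, ∀ r,
        P x / (2 * Real.sqrt (g x + ε ^ 2)) < r →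
        ∃ᶠ z in nhdsWithin x (Set.Ioi x), (z - x)⁻¹ * (h z - h x) < r := by
      intro x _ r hr
      have htend : Filter.Tendsto (slope h x) (nhdsWithin x {x}ᶜ)
          (nhds (P x / (2 * Real.sqrt (g x + ε ^ 2)))) :=
        hasDerivAt_iff_tendsto_slope.1 (hhd x)
      have htend' : Filter.Tendsto (fun z => (z - x)⁻¹ * (h z - h x)) (nhdsWithin x (Set.Ioi x))
          (nhds (P x / (2 * Real.sqrt (g x + ε ^ 2)))) := by
        have hmono : nhdsWithin x (Set.Ioi x) ≤ nhdsWithin x {x}ᶜ :=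
          nhdsWithin_mono x fun z hz => ne_of_gt hz
        have := htend.mono_left hmono
        refine this.congr fun z => ?_
        rw [slope_def_field]
        ring
      exact (htend'.eventually_lt_const hr).frequently
    have happ := le_gronwallBound_of_liminf_deriv_right_le hcont hfreq hinit
      (fun x _ => hbound x) t ⟨ht.1, ht.2⟩
    calc Real.sqrt (g t) ≤ h t := Real.sqrt_le_sqrt (by nlinarith [sq_nonneg ε])
      _ ≤ gronwallBound ε α M (t - 0) := happ
      _ = gronwallBound ε α M t := by rw [sub_zero]
  constructor
  · intro hαpos
    rw [hfrob]
    refine le_of_forall_pos_le_add fun ε' hε' => ?_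
    have hexp : 0 < Real.exp (α * t) := Real.exp_pos _
    have hk := key (ε' / Real.exp (α * t)) (by positivity)
    rw [gronwallBound_of_K_ne_0 (ne_of_gt hαpos)] at hk
    dsimp only at hk
    rw [div_mul_cancel₀ _ (ne_of_gt hexp)] at hk
    have hmono : Real.exp (α * t) ≤ Real.exp (α * τ) :=
      Real.exp_le_exp.2 (mul_le_mul_of_nonneg_left ht.2 hα)
    have hMα : 0 ≤ M / α := div_nonneg hM0 hα
    have : M / α * (Real.exp (α * t) - 1) ≤ M * (Real.exp (α * τ) - 1) / α := by
      rw [div_mul_eq_mul_div]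
      gcongr
    linarith
  · intro hα0
    rw [hfrob]
    refine le_of_forall_pos_le_add fun ε' hε' => ?_
    have hk := key ε' hε'
    rw [hα0] at hk
    rw [gronwallBound_K0] at hk
    dsimp only at hk
    have : M * t ≤ M * τ := mul_le_mul_of_nonneg_left ht.2 hM0
    linarith
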